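/- Let A be a unital alternative *-algebra over ℂ containing a nontrivial symmetric idempotent e satisfying conditions (♠) and (♣), and let Φ : A → A be a map satisfying the *-Jordan n-derivation identity in the last two slots. Then for every a₁₂ ∈ A₁₂ and b₂₁ ∈ A₂₁ one has Φ(a₁₂ + b₂₁) = Φ(a₁₂) + Φ(b₂₁). -/

import Mathlib

/-- The Jordan `•`-product `a • b = ab + b a*`. -/
def starJordan {A : Type*} [NonAssocRing A] [StarRing A] (a b : A) : A :=
  a * b + b * star a

/-- Left-normed iterated Jordan `•`-product of a list (empty list ↦ 0, junk value). -/
def leftStarJordan {A : Type*} [NonAssocRing A] [StarRing A] : List A → A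
  | [] => 0
  | x :: xs => xs.foldl starJordan x

/-- The family `a₁ = ⋯ = a_{n-2} = 1`, `a_{n-1} = x`, `a_n = y`. -/
def lastTwoFamily {A : Type*} [One A] (n : ℕ) (x y : A) : Fin n → A :=
  fun i => if (i : ℕ) = n - 2 then x else if (i : ℕ) = n - 1 then y else 1

/-- `e₁ = e`, `e₂ = 1 - e`. -/
def peirceIdem {A : Type*} [NonAssocRing A] (e : A) : Fin 2 → A :=
  fun i => if i = 0 then e else 1 - e

/-- Membership in the Peirce component `A_{ij}`: `eᵢ x = x` and `x eⱼ = x`. -/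
def inPeirce {A : Type*} [NonAssocRing A] (e : A) (i j : Fin 2) (x : A) : Prop :=
  peirceIdem e i * x = x ∧ x * peirceIdem e j = x

/-- The inner derivation `Ξ_{y,z}(a) = y(za) − z(ya) + y(az) − (ya)z + (az)y − (ay)z`. -/
def innerDer {A : Type*} [NonAssocRing A] (y z a : A) : A :=
  y * (z * a) - z * (y * a) + y * (a * z) - (y * a) * z + (a * z) * y - (a * y) * z

section SJ3Aux

variable {A : Type*} [NonAssocRing A] [StarRing A]

lemma sj3_add_left (x₁ x₂ y : A) :
    starJordan (x₁ + x₂) y = starJordan x₁ y + starJordan x₂ y := by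
  simp only [starJordan, add_mul, mul_add, star_add]; abel

lemma sj3_add_right (x y₁ y₂ : A) :
    starJordan x (y₁ + y₂) = starJordan x y₁ + starJordan x y₂ := by
  simp only [starJordan, add_mul, mul_add]; abel

lemma sj3_sub_left (x₁ x₂ y : A) :
    starJordan (x₁ - x₂) y = starJordan x₁ y - starJordan x₂ y := by
  simp only [starJordan, sub_mul, mul_sub, star_sub]; abel

lemma sj3_sub_right (x y₁ y₂ : A) :
    starJordan x (y₁ - y₂) = starJordan x y₁ - starJordan x y₂ := by
  simp only [starJordan, sub_mul, mul_sub]; abel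

lemma sj3_zero_left (y : A) : starJordan 0 y = 0 := by simp [starJordan]

lemma sj3_zero_right (x : A) : starJordan x 0 = 0 := by simp [starJordan]

lemma sj3_nsmul_left (c : ℕ) (x y : A) :
    starJordan (c • x) y = c • starJordan x y := by
  simp only [starJordan, smul_mul_assoc, star_nsmul, mul_smul_comm, smul_add]

lemma sj3_nsmul_one (c : ℕ) (u : A) :
    starJordan (c • (1:A)) u = (2 * c) • u := by
  simp only [starJordan, smul_mul_assoc, star_nsmul, mul_smul_comm, star_one, one_mul, mul_one]
  rw [two_mul, add_smul]

lemma sj3_lSJ_append_two (h : A) (t : List A) (x y : A) :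
    leftStarJordan ((h :: t) ++ [x, y]) =
      starJordan (starJordan (leftStarJordan (h :: t)) x) y := by
  simp [leftStarJordan, List.foldl_append]

lemma sj3_lSJ_append_two' (l : List A) (hl : l ≠ []) (x y : A) :
    leftStarJordan (l ++ [x, y]) =
      starJordan (starJordan (leftStarJordan l) x) y := by
  rcases l with _ | ⟨h, t⟩
  · exact absurd rfl hl
  · exact sj3_lSJ_append_two h t x y

lemma sj3_lSJ_replicate_one (k : ℕ) :
    leftStarJordan (List.replicate (k+1) (1:A)) = (2^k : ℕ) • 1 := by
  induction k with
  | zero => simp [leftStarJordan]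
  | succ k ih =>
    rw [List.replicate_succ' (n := k+1) (a := (1:A))]
    rw [show List.replicate (k+1) (1:A) ++ [1] =
        ((1:A) :: List.replicate k 1) ++ [1] by rw [List.replicate_succ]]
    rw [show leftStarJordan (((1:A) :: List.replicate k 1) ++ [1]) =
        starJordan (leftStarJordan ((1:A) :: List.replicate k 1)) 1 by
      simp [leftStarJordan, List.foldl_concat]]
    rw [← List.replicate_succ, ih, sj3_nsmul_one]
    congr 1
    rw [pow_succ, mul_comm]

lemma sj3_lSJ_replicate_append (m : ℕ) (u v : A) :
    leftStarJordan (List.replicate m (1:A) ++ [u, v]) = (2^m : ℕ) • starJordan u v := by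
  cases m with
  | zero => simp [leftStarJordan, starJordan]
  | succ k =>
    rw [List.replicate_succ, sj3_lSJ_append_two, ← List.replicate_succ,
      sj3_lSJ_replicate_one, sj3_nsmul_one, sj3_nsmul_left]
    congr 1
    rw [pow_succ, mul_comm]

lemma sj3_ofFn_update {α : Type*} {nn : ℕ} (f : Fin nn → α) (k : Fin nn) (v : α) :
    List.ofFn (Function.update f k v) = (List.ofFn f).set (k : ℕ) v := by
  apply List.ext_getElem (by simp)
  intro i h1 h2
  rw [List.getElem_ofFn, List.getElem_set, List.getElem_ofFn]
  rw [Function.update_apply]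
  by_cases h : (k : ℕ) = i
  · rw [if_pos h, if_pos (by exact Fin.ext h.symm)]
  · rw [if_neg h, if_neg (by intro hh; exact h (by rw [← hh]))]

end SJ3Aux

theorem stmt_3 {A : Type*} [NonAssocRing A] [Module ℂ A]
    [SMulCommClass ℂ A A] [IsScalarTower ℂ A A] [StarRing A]
    (halt₁ : ∀ a b : A, a * a * b = a * (a * b))
    (halt₂ : ∀ a b : A, b * a * a = b * (a * a))
    (e : A) (heStar : star e = e) (heIdem : e * e = e) (he0 : e ≠ 0) (he1 : e ≠ 1)
    (hsp : ∀ x : A, (∀ r : A, x * r * e = 0) → x = 0)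
    (hcl : ∀ x : A, (∀ r : A, x * r * (1 - e) = 0) → x = 0)
    (n : ℕ) (hn : 2 ≤ n) (Φ : A → A)
    (hΦ : ∀ x y : A,
      Φ (leftStarJordan (List.ofFn (lastTwoFamily n x y))) =
        ∑ k : Fin n, leftStarJordan (List.ofFn
          (Function.update (lastTwoFamily n x y) k (Φ (lastTwoFamily n x y k))))) :
    ∀ a b : A, inPeirce e 0 1 a → inPeirce e 1 0 b →
      Φ (a + b) = Φ a + Φ b := by
  obtain ⟨m, rfl⟩ : ∃ m, n = m + 2 := ⟨n - 2, by omega⟩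
  -- the list underlying the family
  have hfam : ∀ x y : A,
      List.ofFn (lastTwoFamily (m+2) x y) = List.replicate m (1:A) ++ [x, y] := by
    intro x y
    apply List.ext_getElem (by simp)
    intro i h1 h2
    rw [List.getElem_ofFn]
    simp only [lastTwoFamily]
    rw [List.getElem_append]
    simp only [List.length_ofFn] at h1
    by_cases hi : i < m
    · rw [dif_pos (by simpa using hi), if_neg (by omega), if_neg (by omega),
        List.getElem_replicate]
    · rw [dif_neg (by simpa using hi)]
      by_cases him : i = m
      · rw [if_pos (by omega)]
        simp [him]
      · have hi1 : i = m + 1 := by omega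
        rw [if_neg (by omega), if_pos (by omega)]
        simp [hi1]
  -- setting entries of the list
  have hset₁ : ∀ (x y v : A),
      (List.replicate m (1:A) ++ [x, y]).set (m+1) v = List.replicate m (1:A) ++ [x, v] := by
    intro x y v
    rw [List.set_append, if_neg (by simp)]
    congr 1
    have h0 : m + 1 - (List.replicate m (1:A)).length = 1 := by simp
    rw [h0]
    rfl
  have hset₂ : ∀ (x y v : A),
      (List.replicate m (1:A) ++ [x, y]).set m v = List.replicate m (1:A) ++ [v, y] := by
    intro x y v
    rw [List.set_append, if_neg (by simp)]
    congr 1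
    have h0 : m - (List.replicate m (1:A)).length = 0 := by simp
    rw [h0]
    rfl
  have hset₃ : ∀ (x y v : A) (j : ℕ), j < m →
      (List.replicate m (1:A) ++ [x, y]).set j v
        = (List.replicate m (1:A)).set j v ++ [x, y] := by
    intro x y v j hj
    rw [List.set_append, if_pos (by simpa using hj)]
  -- values of the family
  have hfv₁ : ∀ x y : A, lastTwoFamily (m+2) x y (Fin.last (m+1)) = y := by
    intro x y
    simp only [lastTwoFamily, Fin.val_last]
    rw [if_neg (by omega), if_pos (by omega)]
  have hfv₂ : ∀ x y : A, lastTwoFamily (m+2) x y ((Fin.last m).castSucc) = x := by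
    intro x y
    simp only [lastTwoFamily, Fin.coe_castSucc, Fin.val_last]
    rw [if_pos (by omega)]
  have hfv₃ : ∀ (x y : A) (j : Fin m),
      lastTwoFamily (m+2) x y (j.castSucc.castSucc) = 1 := by
    intro x y j
    have hj := j.isLt
    simp only [lastTwoFamily, Fin.coe_castSucc]
    rw [if_neg (by omega), if_neg (by omega)]
  -- the key identity
  have key : ∀ x y : A, Φ ((2^m : ℕ) • starJordan x y) =
      (∑ j : Fin m, starJordan (starJordan
          (leftStarJordan ((List.replicate m (1:A)).set (j:ℕ) (Φ 1))) x) y)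
      + (2^m : ℕ) • starJordan (Φ x) y + (2^m : ℕ) • starJordan x (Φ y) := by
    intro x y
    have h0 := hΦ x y
    rw [hfam x y, sj3_lSJ_replicate_append] at h0
    rw [h0]
    rw [Fin.sum_univ_castSucc, Fin.sum_univ_castSucc]
    congr 1
    · congr 1
      · apply Finset.sum_congr rfl
        intro j _
        rw [hfv₃ x y j, sj3_ofFn_update, hfam,
          show ((j.castSucc.castSucc : Fin (m+2)) : ℕ) = (j:ℕ) by simp,
          hset₃ x y (Φ 1) (j:ℕ) j.isLt,
          sj3_lSJ_append_two' _ (by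
            intro hnil
            have hj := j.pos
            have := congrArg List.length hnil
            simp at this
            omega)]
      · rw [hfv₂ x y, sj3_ofFn_update, hfam,
          show (((Fin.last m).castSucc : Fin (m+2)) : ℕ) = m by simp,
          hset₂, sj3_lSJ_replicate_append]
    · rw [hfv₁ x y, sj3_ofFn_update, hfam,
        show ((Fin.last (m+1) : Fin (m+2)) : ℕ) = m+1 by simp,
        hset₁, sj3_lSJ_replicate_append]
    -- cancellation of nonzero natural scalars
  have hcan : ∀ (k : ℕ), k ≠ 0 → ∀ z w : A, k • z = k • w → z = w := by
    intro k hk z w h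
    have h2 : ((k:ℂ)) • z = ((k:ℂ)) • w := by
      rw [Nat.cast_smul_eq_nsmul, Nat.cast_smul_eq_nsmul, h]
    have hk' : (k:ℂ) ≠ 0 := Nat.cast_ne_zero.mpr hk
    calc z = (k:ℂ)⁻¹ • ((k:ℂ) • z) := (inv_smul_smul₀ hk' z).symm
      _ = (k:ℂ)⁻¹ • ((k:ℂ) • w) := by rw [h2]
      _ = w := inv_smul_smul₀ hk' w
  have hc2 : (2^m : ℕ) ≠ 0 := pow_ne_zero m two_ne_zero
  -- Φ 0 = 0
  have hΦ0 : Φ 0 = 0 := by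
    have h := key 0 0
    rw [sj3_zero_left] at h
    simpa [sj3_zero_left, sj3_zero_right] using h
  intro a b ha hb
  obtain ⟨ha1, ha2⟩ := ha
  obtain ⟨hb1, hb2⟩ := hb
  simp only [peirceIdem, if_pos, if_neg, Fin.isValue] at ha1 ha2 hb1 hb2
  norm_num at ha1 ha2 hb1 hb2
  -- ha1 : e * a = a, ha2 : a * (1 - e) = a, hb1 : (1 - e) * b = b, hb2 : b * e = b
  have hsf : star (1 - e : A) = 1 - e := by rw [star_sub, star_one, heStar]
  have hae : a * e = 0 := by
    have h := ha2; rw [mul_sub, mul_one] at h; exact sub_eq_self.mp h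
  have heb : e * b = 0 := by
    have h := hb1; rw [sub_mul, one_mul] at h; exact sub_eq_self.mp h
  have hesa : e * star a = 0 := by
    calc e * star a = star e * star a := by rw [heStar]
      _ = star (a * e) := (star_mul a e).symm
      _ = 0 := by rw [hae, star_zero]
  have hesb : e * star b = star b := by
    calc e * star b = star e * star b := by rw [heStar]
      _ = star (b * e) := (star_mul b e).symm
      _ = star b := by rw [hb2]
  -- values of starJordan
  have hJae : starJordan a e = 0 := by rw [starJordan, hae, hesa, add_zero]
  have hJabe : starJordan (a+b) e = starJordan b e := by
    rw [sj3_add_left, hJae, zero_add]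
  have hJbf : starJordan b (1-e) = 0 := by
    rw [starJordan, mul_sub, mul_one, hb2, sub_self, sub_mul, one_mul, hesb, sub_self,
      add_zero]
  have hJabf : starJordan (a+b) (1-e) = starJordan a (1-e) := by
    rw [sj3_add_left, hJbf, add_zero]
  have hJea : starJordan e a = a := by rw [starJordan, ha1, heStar, hae, add_zero]
  have hJeb : starJordan e b = b := by rw [starJordan, heb, heStar, hb2, zero_add]
  have hJeab : starJordan e (a+b) = a + b := by rw [sj3_add_right, hJea, hJeb]
  have hJfa : starJordan (1-e) a = a := by
    rw [starJordan, hsf, sub_mul, one_mul, ha1, sub_self, ha2, zero_add]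
  have hJfb : starJordan (1-e) b = b := by
    rw [starJordan, hsf, hb1, mul_sub, mul_one, hb2, sub_self, add_zero]
  have hJfab : starJordan (1-e) (a+b) = a + b := by rw [sj3_add_right, hJfa, hJfb]
  -- generic sums of starJordan values at e and 1-e
  have hsumgen₁ : ∀ u : A, starJordan u e + starJordan u (1-e) = u + star u := by
    intro u
    rw [starJordan, starJordan, mul_sub, mul_one, sub_mul, one_mul]
    abel
  have hsumgen₂ : ∀ u : A, starJordan e u + starJordan (1-e) u = u + u := by
    intro u
    rw [starJordan, starJordan, heStar, hsf, sub_mul, one_mul, mul_sub, mul_one]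
    abel
  -- the difference T
  set T := Φ (a+b) - Φ a - Φ b with hTdef
  -- Step 1 : starJordan T e = 0
  have hJTe : starJordan T e = 0 := by
    have h1 := key (a+b) e
    have h2 := key a e
    have h3 := key b e
    rw [hJabe] at h1
    rw [hJae, smul_zero, hΦ0] at h2
    have h4 : (∑ j : Fin m, starJordan (starJordan
          (leftStarJordan ((List.replicate m (1:A)).set (j:ℕ) (Φ 1))) (a+b)) e)
        + (2^m:ℕ) • starJordan (Φ (a+b)) e + (2^m:ℕ) • starJordan (a+b) (Φ e)
        - ((∑ j : Fin m, starJordan (starJordan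
          (leftStarJordan ((List.replicate m (1:A)).set (j:ℕ) (Φ 1))) a) e)
        + (2^m:ℕ) • starJordan (Φ a) e + (2^m:ℕ) • starJordan a (Φ e))
        - ((∑ j : Fin m, starJordan (starJordan
          (leftStarJordan ((List.replicate m (1:A)).set (j:ℕ) (Φ 1))) b) e)
        + (2^m:ℕ) • starJordan (Φ b) e + (2^m:ℕ) • starJordan b (Φ e)) = 0 := by
      rw [← h1, ← h2, ← h3]
      simp
    simp only [sj3_add_right, sj3_add_left, smul_add] at h4
    rw [Finset.sum_add_distrib] at h4
    refine hcan _ hc2 _ 0 ?_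
    rw [smul_zero, hTdef, sj3_sub_left, sj3_sub_left, smul_sub, smul_sub]
    refine Eq.trans ?_ h4
    abel
  -- Step 2 : starJordan T (1-e) = 0
  have hJTf : starJordan T (1-e) = 0 := by
    have h1 := key (a+b) (1-e)
    have h2 := key b (1-e)
    have h3 := key a (1-e)
    rw [hJabf] at h1
    rw [hJbf, smul_zero, hΦ0] at h2
    have h4 : (∑ j : Fin m, starJordan (starJordan
          (leftStarJordan ((List.replicate m (1:A)).set (j:ℕ) (Φ 1))) (a+b)) (1-e))
        + (2^m:ℕ) • starJordan (Φ (a+b)) (1-e) + (2^m:ℕ) • starJordan (a+b) (Φ (1-e))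
        - ((∑ j : Fin m, starJordan (starJordan
          (leftStarJordan ((List.replicate m (1:A)).set (j:ℕ) (Φ 1))) b) (1-e))
        + (2^m:ℕ) • starJordan (Φ b) (1-e) + (2^m:ℕ) • starJordan b (Φ (1-e)))
        - ((∑ j : Fin m, starJordan (starJordan
          (leftStarJordan ((List.replicate m (1:A)).set (j:ℕ) (Φ 1))) a) (1-e))
        + (2^m:ℕ) • starJordan (Φ a) (1-e) + (2^m:ℕ) • starJordan a (Φ (1-e))) = 0 := by
      rw [← h1, ← h2, ← h3]
      simp
    simp only [sj3_add_right, sj3_add_left, smul_add] at h4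
    rw [Finset.sum_add_distrib] at h4
    refine hcan _ hc2 _ 0 ?_
    rw [smul_zero, hTdef, sj3_sub_left, sj3_sub_left, smul_sub, smul_sub]
    refine Eq.trans ?_ h4
    abel
  -- star T = -T and T e = e T
  have hTstar : star T = -T := by
    have hsum := hsumgen₁ T
    rw [hJTe, hJTf, add_zero] at hsum
    exact eq_neg_of_add_eq_zero_right hsum.symm
  have hTe : T * e = e * T := by
    have h := hJTe
    rw [starJordan, hTstar, mul_neg] at h
    rw [← sub_eq_zero, sub_eq_add_neg]
    exact h
  -- Step 3 : e-slot and (1-e)-slot in first position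
  have hDe : Φ ((2^m:ℕ) • (a+b)) - Φ ((2^m:ℕ) • a) - Φ ((2^m:ℕ) • b)
      = (2^m:ℕ) • starJordan e T := by
    have h1 := key e (a+b)
    have h2 := key e a
    have h3 := key e b
    rw [hJeab] at h1
    rw [hJea] at h2
    rw [hJeb] at h3
    rw [h1, h2, h3, hTdef, sj3_sub_right, sj3_sub_right, smul_sub, smul_sub]
    simp only [sj3_add_right, smul_add]
    rw [Finset.sum_add_distrib]
    abel
  have hDf : Φ ((2^m:ℕ) • (a+b)) - Φ ((2^m:ℕ) • a) - Φ ((2^m:ℕ) • b)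
      = (2^m:ℕ) • starJordan (1-e) T := by
    have h1 := key (1-e) (a+b)
    have h2 := key (1-e) a
    have h3 := key (1-e) b
    rw [hJfab] at h1
    rw [hJfa] at h2
    rw [hJfb] at h3
    rw [h1, h2, h3, hTdef, sj3_sub_right, sj3_sub_right, smul_sub, smul_sub]
    simp only [sj3_add_right, smul_add]
    rw [Finset.sum_add_distrib]
    abel
  have hef : starJordan e T = starJordan (1-e) T :=
    hcan _ hc2 _ _ (by rw [← hDe, ← hDf])
  have hsum2 := hsumgen₂ T
  rw [← hef] at hsum2
  have hJeT : starJordan e T = T := by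
    refine hcan 2 (by norm_num) _ _ ?_
    rw [two_smul, two_smul]
    exact hsum2
  -- conclude
  rw [starJordan, heStar, hTe] at hJeT
  -- hJeT : e * T + e * T = T
  have h3' : e * T + e * T = e * T := by
    have h := congrArg (fun z => e * z) hJeT
    simp only [mul_add] at h
    have h4 : e * (e * T) = e * T := by rw [← halt₁ e T, heIdem]
    rw [h4] at h
    exact h
  have heT0 : e * T = 0 := by
    have h5 : e * T + e * T = e * T + 0 := by rw [add_zero]; exact h3'
    exact add_left_cancel h5
  have hT0 : T = 0 := by rw [← hJeT, heT0, add_zero]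
  rw [hTdef, sub_sub, sub_eq_zero] at hT0
  exact hT0
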